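/- Let p be a prime, R a commutative ring of characteristic p, W ⊆ R a submonoid, and M an R-module. Write F_*N for an R-module N regarded as an R-module via restriction of scalars along the Frobenius (so r acts on F_*N as multiplication by r^p). Then the canonical map F_*M → F_*(W⁻¹M), m ↦ m/1, exhibits F_*(W⁻¹M) as the localization of the R-module F_*M at W: every w ∈ W acts invertibly on F_*(W⁻¹M), and the induced map W⁻¹(F_*M) → F_*(W⁻¹M) is an isomorphism. In other words, Frobenius pushforward of modules commutes with localization. -/

import Mathlib

/-!
STATEMENT 14: Let `p` be a prime, `R` a commutative ring of characteristic `p`,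
`W ⊆ R` a submonoid and `M` an `R`-module. Writing `F_* N` for `N` with the
`R`-action restricted along the Frobenius (`r` acts as multiplication by `r ^ p`),
the canonical map `F_* M → F_* (W⁻¹ M)`, `m ↦ m/1`, exhibits `F_* (W⁻¹ M)` as the
localization of `F_* M` at `W`: every `w ∈ W` acts invertibly on `F_* (W⁻¹ M)` and
the induced map `W⁻¹ (F_* M) → F_* (W⁻¹ M)` is an isomorphism; i.e. Frobenius
pushforward commutes with localization.
-/

universe u v

/-- `F_* N`: the module `N` with `R`-action restricted along the Frobenius of `R`. -/
def FrobPush (p : ℕ) (R : Type u) (N : Type v) : Type v := N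

instance (p : ℕ) (R : Type u) (N : Type v) [AddCommGroup N] :
    AddCommGroup (FrobPush p R N) :=
  inferInstanceAs (AddCommGroup N)

/-- The `R`-module structure on `F_* N`: `r` acts as multiplication by `r ^ p`. -/
instance (p : ℕ) (R : Type u) (N : Type v) [CommRing R] [Fact p.Prime] [CharP R p]
    [AddCommGroup N] [Module R N] : Module R (FrobPush p R N) :=
  Module.compHom N (frobenius R p)

variable (p : ℕ) (R : Type u) [CommRing R] [Fact p.Prime] [CharP R p]
  (W : Submonoid R) (M : Type u) [AddCommGroup M] [Module R M]

/-- The canonical map `F_* M →ₗ[R] F_* (W⁻¹ M)`, `m ↦ m/1`. -/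
noncomputable def frobPushMk : FrobPush p R M →ₗ[R] FrobPush p R (LocalizedModule W M) where
  toFun := LocalizedModule.mkLinearMap W M
  map_add' x y := (LocalizedModule.mkLinearMap W M).map_add x y
  map_smul' r m := (LocalizedModule.mkLinearMap W M).map_smul (frobenius R p r) m


section Aux

variable {p : ℕ} {R : Type u} [CommRing R] [Fact p.Prime] [CharP R p]
variable {N : Type v} [AddCommGroup N] [Module R N]

/-- In `FrobPush`, `r` acts as `r ^ p` (acting via the original module structure on `N`). -/
theorem frobPush_smul_def (r : R) (x : FrobPush p R N) :
    r • x = @HSMul.hSMul R N N (@instHSMul R N SMulZeroClass.toSMul) (r ^ p) x := by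
  rw [← frobenius_def (R := R) p r]
  rfl

/-- Transport an `R`-linear endomorphism along `FrobPush`. -/
def frobEnd (f : N →ₗ[R] N) : FrobPush p R N →ₗ[R] FrobPush p R N where
  toFun := f
  map_add' := f.map_add
  map_smul' r x := f.map_smul (frobenius R p r) x

theorem frobEnd_apply (f : N →ₗ[R] N) (x : FrobPush p R N) : frobEnd f x = f x := rfl

end Aux

theorem frobPushMk_apply (m : M) :
    frobPushMk p R W M m = LocalizedModule.mk m 1 := rfl

theorem frobPush_isLocalizedModule : IsLocalizedModule W (frobPushMk p R W M) := by
  have hp1 : 1 ≤ p := (Fact.out : p.Prime).one_lt.le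
  constructor
  · intro w
    refine ⟨⟨algebraMap R (Module.End R (FrobPush p R (LocalizedModule W M))) w,
      frobEnd (LocalizedModule.divBy (M := M) (⟨(w : R) ^ p, pow_mem w.2 p⟩ : W)), ?_, ?_⟩, rfl⟩
    · ext x
      rw [Module.End.mul_apply, Module.End.one_apply, Module.algebraMap_end_apply,
        frobEnd_apply]
      have := LocalizedModule.mul_by_divBy (M := M) (⟨(w : R) ^ p, pow_mem w.2 p⟩ : W) x
      rw [Module.algebraMap_end_apply] at this
      exact (frobPush_smul_def (N := LocalizedModule W M) (w : R) _).trans this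
    · ext x
      rw [Module.End.mul_apply, Module.End.one_apply, Module.algebraMap_end_apply,
        frobPush_smul_def (N := LocalizedModule W M)]
      have := LocalizedModule.divBy_mul_by (M := M) (⟨(w : R) ^ p, pow_mem w.2 p⟩ : W) x
      exact this
  · intro y
    induction y using LocalizedModule.induction_on with
    | h m s =>
      set mM : M := m with hmM
      refine ⟨⟨(((s : R) ^ (p - 1)) • mM : M), s⟩, ?_⟩
      have key : ((s : R) ^ p) • LocalizedModule.mk (M := M) mM s
          = LocalizedModule.mk (M := M) (((s : R) ^ (p - 1)) • mM) (1 : W) := by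
        rw [LocalizedModule.smul'_mk]
        have hs : (s : R) ^ p • mM = (s : R) • ((s : R) ^ (p - 1) • mM) := by
          rw [← mul_smul, ← pow_succ', Nat.sub_add_cancel hp1]
        rw [hs, ← Submonoid.smul_def, LocalizedModule.mk_cancel]
      rw [frobPushMk_apply]
      exact (frobPush_smul_def (N := LocalizedModule W M) (s : R) (LocalizedModule.mk mM s)).trans key
  · intro m₁ m₂ h
    have h' : LocalizedModule.mk (M := M) m₁ 1 = LocalizedModule.mk (M := M) m₂ 1 := h
    obtain ⟨u, hu⟩ := LocalizedModule.mk_eq.mp h'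
    simp only [one_smul, Submonoid.smul_def] at hu
    refine ⟨u, ?_⟩
    simp only [Submonoid.smul_def, frobPush_smul_def]
    have hup : (u : R) ^ p = (u : R) ^ (p - 1) * (u : R) := by
      rw [← pow_succ, Nat.sub_add_cancel hp1]
    rw [hup]
    have e1 : (1 : W) • (show M from m₁) = show M from m₁ := one_smul _ _
    have e2 : (1 : W) • (show M from m₂) = show M from m₂ := one_smul _ _
    have hu' : (u : R) • (show M from m₁) = (u : R) • (show M from m₂) :=
      (congrArg (fun y : M => (u : R) • y) e1).symm.trans
        (hu.trans (congrArg (fun y : M => (u : R) • y) e2))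
    exact (mul_smul ((u : R) ^ (p - 1)) (u : R) (show M from m₁)).trans
      ((congrArg (fun y : M => ((u : R) ^ (p - 1)) • y) hu').trans
        (mul_smul ((u : R) ^ (p - 1)) (u : R) (show M from m₂)).symm)

theorem frobPush_commutes_with_localization :
    (∃ h : ∀ w : W, IsUnit
        (algebraMap R (Module.End R (FrobPush p R (LocalizedModule W M))) w),
      Function.Bijective (LocalizedModule.lift W (frobPushMk p R W M) h)) ∧
    IsLocalizedModule W (frobPushMk p R W M) := by
  have inst := frobPush_isLocalizedModule p R W M
  refine ⟨⟨inst.map_units, ?_⟩, inst⟩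
  have heq : LocalizedModule.lift W (frobPushMk p R W M) inst.map_units =
      (IsLocalizedModule.iso W (frobPushMk p R W M)).toLinearMap := by
    apply LocalizedModule.lift_unique
    ext m
    have h2 := LinearMap.congr_fun (IsLocalizedModule.iso_symm_comp W (frobPushMk p R W M)) m
    simp only [LinearMap.comp_apply, LinearEquiv.coe_coe,
      LocalizedModule.mkLinearMap_apply] at h2 ⊢
    rw [← h2, LinearEquiv.apply_symm_apply]
  rw [heq]
  exact (IsLocalizedModule.iso W (frobPushMk p R W M)).bijective
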